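/- Let S be a collection of (n,d)-types closed under refinement and with pairwise acyclic comparability graphs, and suppose A ∈ S has every element of [d] appearing in A and no singleton coordinate (|A_i| ≥ 2 for all i). If B is an (n,d)-type whose comparability graph CG(B,A) contains a directed cycle, then CG(B,A') contains a directed cycle for some proper refinement A' of A, or (after relabeling) the cycle has length d, A_i = {i, i+1 mod d} for all i in the cycle coordinates, and the total refinement (1,2,...,d) of B witnesses B having a total refinement contained in A that is not a refinement of A. -/

import Mathlib

open Finset

/-- An `(n,d)`-type: an `n`-tuple of subsets of `[d]`. -/
abbrev NDType (n d : ℕ) := Fin n → Finset (Fin d)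

/-- All entries nonempty. -/
def IsType {n d : ℕ} (A : NDType n d) : Prop := ∀ i, (A i).Nonempty

/-- A directed edge `u → v` of the comparability graph `CG(A,B)`:
for some coordinate `i`, `u ∈ A i`, `v ∈ B i`, and not both lie in `A i ∩ B i`. -/
def DirEdge {n d : ℕ} (A B : NDType n d) (u v : Fin d) : Prop :=
  u ≠ v ∧ ∃ i, u ∈ A i ∧ v ∈ B i ∧ ¬ (u ∈ A i ∩ B i ∧ v ∈ A i ∩ B i)

/-- An undirected edge of `CG(A,B)`: both endpoints lie in some `A i ∩ B i`. -/
def UndirEdge {n d : ℕ} (A B : NDType n d) (u v : Fin d) : Prop :=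
  u ≠ v ∧ ∃ i, u ∈ A i ∩ B i ∧ v ∈ A i ∩ B i

/-- A step of a directed walk in `CG(A,B)`: a directed edge in the right
direction, or an undirected edge. -/
def Step {n d : ℕ} (A B : NDType n d) (u v : Fin d) : Prop :=
  DirEdge A B u v ∨ UndirEdge A B u v

/-- `CG(A,B)` contains a directed cycle: a closed walk all of whose directed
edges point in the walk direction, with at least one directed edge. -/
def HasDirectedCycle {n d : ℕ} (A B : NDType n d) : Prop :=
  ∃ (k : ℕ) (v : Fin (k + 1) → Fin d),
    v 0 = v (Fin.last k) ∧
    (∀ i : Fin k, Step A B (v i.castSucc) (v i.succ)) ∧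
    (∃ i : Fin k, DirEdge A B (v i.castSucc) (v i.succ))

/-- The comparability graph `CG(A,B)` is acyclic. -/
def Acyclic {n d : ℕ} (A B : NDType n d) : Prop := ¬ HasDirectedCycle A B

/-- An ordered partition of `[d]` into `k` (nonempty, ordered) parts. -/
def IsOrderedPartition {d k : ℕ} (P : Fin k → Finset (Fin d)) : Prop :=
  (∀ a, (P a).Nonempty) ∧ (∀ a b, a ≠ b → Disjoint (P a) (P b)) ∧
    (∀ j : Fin d, ∃ a, j ∈ P a)

/-- `B` is the refinement `A|P` of `A` with respect to the ordered partition `P`: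
`B i = A i ∩ P (m i)` where `m i` is the least index with nonempty intersection. -/
def IsRefinementBy {n d k : ℕ} (A : NDType n d) (P : Fin k → Finset (Fin d))
    (B : NDType n d) : Prop :=
  ∀ i, ∃ a, (A i ∩ P a).Nonempty ∧ (∀ b, b < a → A i ∩ P b = ∅) ∧
    B i = A i ∩ P a

/-- `B` is a refinement of `A` (with respect to some ordered partition). -/
def IsRefinement {n d : ℕ} (B A : NDType n d) : Prop :=
  ∃ (k : ℕ) (P : Fin k → Finset (Fin d)),
    IsOrderedPartition P ∧ IsRefinementBy A P B

/-- A total refinement: a refinement all of whose entries are singletons. -/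
def IsTotalRefinement {n d : ℕ} (B A : NDType n d) : Prop :=
  IsRefinement B A ∧ ∀ i, ∃ j, B i = {j}

/-- A tope: a type all of whose entries are singletons. -/
def IsTope {n d : ℕ} (A : NDType n d) : Prop := ∀ i, ∃ j, A i = {j}
open Pointwise

/-- The `j`-th standard basis vector of `ℝ^d`. -/
noncomputable def stdVec {d : ℕ} (j : Fin d) : Fin d → ℝ := Pi.single j 1

/-- The Minkowski cell `C_A = Σᵢ conv{e_j : j ∈ A i} ⊆ ℝ^d` of an `(n,d)`-type. -/
noncomputable def cell {n d : ℕ} (A : NDType n d) : Set (Fin d → ℝ) :=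
  ∑ i : Fin n, convexHull ℝ (stdVec '' (A i : Set (Fin d)))

/-- The dilated simplex `nΔ^{d-1} ⊆ ℝ^d`. -/
def dilSimplex (n d : ℕ) : Set (Fin d → ℝ) :=
  {x | (∀ j, 0 ≤ x j) ∧ ∑ j, x j = (n : ℝ)}

/-- A mixed subdivision of `nΔ^{d-1}`, encoded by the set of types of its cells:
all entries of a cell type are nonempty, the family of cells is closed under
faces (= refinements), any two cells intersect in the Minkowski sum of the
intersections of their summands, and the cells cover `nΔ^{d-1}`. -/
structure MixedSubdivision (n d : ℕ) where
  cells : Set (NDType n d)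
  isType : ∀ A ∈ cells, IsType A
  refine_closed : ∀ A ∈ cells, ∀ B, IsRefinement B A → B ∈ cells
  inter : ∀ A ∈ cells, ∀ B ∈ cells,
    cell A ∩ cell B = cell (fun i => A i ∩ B i)
  covers : ⋃ A ∈ cells, cell A = dilSimplex n d


/-! ### Auxiliary development -/

section AuxDev

variable {n d : ℕ}

/-- Cycle data in `ℕ`-indexed form: a closed walk of length `k` in `CG(B,A)`
with chosen coordinates, all steps being edges `B → A`, and at least one
properly directed step. -/
def CData (B A : NDType n d) (k : ℕ) (v : ℕ → Fin d) (c : ℕ → Fin n) : Prop :=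
  v k = v 0 ∧ (∀ l, l < k → v l ∈ B (c l)) ∧ (∀ l, l < k → v (l+1) ∈ A (c l)) ∧
    (∀ l, l < k → v l ≠ v (l+1)) ∧ (∃ l, l < k ∧ (v l ∉ A (c l) ∨ v (l+1) ∉ B (c l)))

lemma dir_mk {B A : NDType n d} {u w : Fin d} {i : Fin n}
    (h1 : u ∈ B i) (h2 : w ∈ A i) (h3 : u ∉ A i ∨ w ∉ B i) (hne : u ≠ w) :
    DirEdge B A u w :=
  ⟨hne, i, h1, h2, by simp only [Finset.mem_inter]; tauto⟩

lemma step_mk {B A : NDType n d} {u w : Fin d} {i : Fin n}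
    (h1 : u ∈ B i) (h2 : w ∈ A i) (hne : u ≠ w) : Step B A u w := by
  by_cases h : u ∈ A i ∧ w ∈ B i
  · exact Or.inr ⟨hne, i, Finset.mem_inter.mpr ⟨h1, h.1⟩, Finset.mem_inter.mpr ⟨h.2, h2⟩⟩
  · exact Or.inl (dir_mk h1 h2 (by tauto) hne)

lemma hdc_of_cdata {B A : NDType n d} {k : ℕ} {v : ℕ → Fin d} {c : ℕ → Fin n}
    (h : CData B A k v c) : HasDirectedCycle B A := by
  obtain ⟨hcl, hvb, hva, hne, l0, hl0, hdir⟩ := h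
  refine ⟨k, fun j => v j.val, ?_, fun i => ?_, ⟨⟨l0, hl0⟩, ?_⟩⟩
  · show v (0 : Fin (k+1)).val = v (Fin.last k).val
    simp only [Fin.val_zero, Fin.val_last]
    exact hcl.symm
  · exact step_mk (hvb i.val i.isLt) (hva i.val i.isLt) (hne i.val i.isLt)
  · exact dir_mk (hvb l0 hl0) (hva l0 hl0) hdir (hne l0 hl0)

lemma cdata_of_hdc {B A : NDType n d} (h : HasDirectedCycle B A) :
    ∃ k v c, CData B A k v c := by
  obtain ⟨k, v, hcl, hstep, i0, hdir⟩ := h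
  have hstep' : ∀ i : Fin k, ∃ ci : Fin n,
      v i.castSucc ∈ B ci ∧ v i.succ ∈ A ci ∧ v i.castSucc ≠ v i.succ := by
    intro i
    rcases hstep i with hD | hU
    · obtain ⟨hne, j, h1, h2, _⟩ := hD
      exact ⟨j, h1, h2, hne⟩
    · obtain ⟨hne, j, h1, h2⟩ := hU
      rw [Finset.mem_inter] at h1 h2
      exact ⟨j, h1.1, h2.2, hne⟩
  choose cf hc1 hc2 hc3 using hstep'
  obtain ⟨hne0, j0, hd1, hd2, hd3⟩ := hdir
  simp only [Finset.mem_inter] at hd3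
  refine ⟨k, fun l => if h : l < k + 1 then v ⟨l, h⟩ else v 0,
    fun l => if l = i0.val then j0 else (if h : l < k then cf ⟨l, h⟩ else j0),
    ?_, ?_, ?_, ?_, ⟨i0.val, i0.isLt, ?_⟩⟩
  · have h1 : k < k + 1 := by omega
    have h2 : (0:ℕ) < k + 1 := by omega
    simp only [dif_pos h1, dif_pos h2]
    have : (⟨k, h1⟩ : Fin (k+1)) = Fin.last k := rfl
    rw [this]
    have : (⟨0, h2⟩ : Fin (k+1)) = 0 := rfl
    rw [this]
    exact hcl.symm
  · intro l hl
    have hl1 : l < k + 1 := by omega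
    simp only [dif_pos hl1]
    by_cases he : l = i0.val
    · simp only [if_pos he]
      have : (⟨l, hl1⟩ : Fin (k+1)) = i0.castSucc := by
        apply Fin.ext; simp [he]
      rw [this]; exact hd1
    · simp only [if_neg he, dif_pos hl]
      have : (⟨l, hl1⟩ : Fin (k+1)) = (⟨l, hl⟩ : Fin k).castSucc := rfl
      rw [this]; exact hc1 _
  · intro l hl
    have hl1 : l + 1 < k + 1 := by omega
    simp only [dif_pos hl1]
    by_cases he : l = i0.val
    · simp only [if_pos he]
      have : (⟨l+1, hl1⟩ : Fin (k+1)) = i0.succ := by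
        apply Fin.ext; simp [he]
      rw [this]; exact hd2
    · simp only [if_neg he, dif_pos hl]
      have : (⟨l+1, hl1⟩ : Fin (k+1)) = (⟨l, hl⟩ : Fin k).succ := rfl
      rw [this]; exact hc2 _
  · intro l hl
    have hl1 : l < k + 1 := by omega
    have hl2 : l + 1 < k + 1 := by omega
    simp only [dif_pos hl1, dif_pos hl2]
    have e1 : (⟨l, hl1⟩ : Fin (k+1)) = (⟨l, hl⟩ : Fin k).castSucc := rfl
    have e2 : (⟨l+1, hl2⟩ : Fin (k+1)) = (⟨l, hl⟩ : Fin k).succ := rfl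
    rw [e1, e2]; exact hc3 _
  · have hl1 : i0.val < k + 1 := by omega
    have hl2 : i0.val + 1 < k + 1 := by omega
    simp only [dif_pos hl1, dif_pos hl2, if_pos rfl]
    have e1 : (⟨i0.val, hl1⟩ : Fin (k+1)) = i0.castSucc := rfl
    have e2 : (⟨i0.val+1, hl2⟩ : Fin (k+1)) = i0.succ := rfl
    rw [e1, e2]
    tauto

/-- `A|P` exists for every ordered partition `P`. -/
lemma exists_refinementBy {k : ℕ} (A : NDType n d) (hA : ∀ i, (A i).Nonempty)
    (P : Fin k → Finset (Fin d)) (hOP : IsOrderedPartition P) :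
    ∃ A' : NDType n d, IsRefinementBy A P A' := by
  have hne : ∀ i, (Finset.univ.filter fun a => (A i ∩ P a).Nonempty).Nonempty := by
    intro i
    obtain ⟨x, hx⟩ := hA i
    obtain ⟨a, ha⟩ := hOP.2.2 x
    exact ⟨a, Finset.mem_filter.mpr ⟨Finset.mem_univ _,
      ⟨x, Finset.mem_inter.mpr ⟨hx, ha⟩⟩⟩⟩
  refine ⟨fun i => A i ∩ P ((Finset.univ.filter fun a => (A i ∩ P a).Nonempty).min' (hne i)),
    fun i => ?_⟩
  set a := (Finset.univ.filter fun a => (A i ∩ P a).Nonempty).min' (hne i) with ha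
  have hmem := Finset.min'_mem _ (hne i)
  rw [← ha] at hmem
  refine ⟨a, (Finset.mem_filter.mp hmem).2, ?_, rfl⟩
  intro b hb
  by_contra hbne
  have : b ∈ Finset.univ.filter fun a => (A i ∩ P a).Nonempty :=
    Finset.mem_filter.mpr ⟨Finset.mem_univ _, Finset.nonempty_iff_ne_empty.mpr hbne⟩
  have := Finset.min'_le _ b this
  rw [← ha] at this
  exact absurd hb (not_lt.mpr this)

lemma mod_cancel {K x y t t' : ℕ} (hK : 0 < K) (ht : t < K) (ht' : t' < K)
    (hxy : x % K = y % K) (hsum : x + t = y + t') : t = t' := by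
  have h1 : x + t ≡ y + t [MOD K] := Nat.ModEq.add_right t hxy
  have h2 : y + t' ≡ y + t [MOD K] := by rw [← hsum]; exact h1
  have h3 : t' ≡ t [MOD K] := Nat.ModEq.add_left_cancel' y h2
  have h4 : t' % K = t % K := h3
  rw [Nat.mod_eq_of_lt ht, Nat.mod_eq_of_lt ht'] at h4
  omega

lemma AR1 (K a b : ℕ) (hK : 0 < K) : (b + (a + (K - b % K)) % K) % K = a % K := by
  have hy : b % K < K := Nat.mod_lt _ hK
  have h1 : b + (a + (K - b % K)) % K ≡ b % K + (a + (K - b % K)) [MOD K] :=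
    Nat.ModEq.add (Nat.mod_modEq b K).symm (Nat.mod_modEq _ K)
  have h2 : b % K + (a + (K - b % K)) = a + K := by omega
  have h3 : (b + (a + (K - b % K)) % K) % K = (b % K + (a + (K - b % K))) % K := h1
  rw [h3, h2, Nat.add_mod_right]

lemma modsum (K a b : ℕ) (hK : 0 < K) (hne : a % K ≠ b % K) :
    (a + (K - b % K)) % K + (b + (K - a % K)) % K = K := by
  have hx : a % K < K := Nat.mod_lt _ hK
  have hy : b % K < K := Nat.mod_lt _ hK
  have e1 : ∀ x c : ℕ, (x + c) % K = (x % K + c) % K := by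
    intro x c
    conv_lhs => rw [Nat.add_mod]
    conv_rhs => rw [Nat.add_mod, Nat.mod_mod_of_dvd x dvd_rfl]
  rw [e1 a (K - b % K), e1 b (K - a % K)]
  set x := a % K
  set y := b % K
  rcases lt_or_gt_of_ne hne with h | h
  · have h1 : x + (K - y) < K := by omega
    have h2 : y + (K - x) = K + (y - x) := by omega
    rw [Nat.mod_eq_of_lt h1, h2, Nat.add_mod_left, Nat.mod_eq_of_lt (by omega)]
    omega
  · have h1 : y + (K - x) < K := by omega
    have h2 : x + (K - y) = K + (x - y) := by omega
    rw [Nat.mod_eq_of_lt h1, h2, Nat.add_mod_left, Nat.mod_eq_of_lt (by omega)]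
    omega

lemma no_cyclic_strict {k' K : ℕ} (f : ℕ → Fin k') (hK : 0 < K)
    (hmono : ∀ l, f l < f (l+1)) (hcl : f K = f 0) : False := by
  have key : ∀ m, (f 0).val + m ≤ (f m).val := by
    intro m
    induction m with
    | zero => simp
    | succ m ih =>
      have h2 := hmono m
      rw [Fin.lt_def] at h2
      omega
  have := key K
  rw [hcl] at this
  omega

/-- Context: a vertex-minimal directed cycle in `CG(B,A)`, in periodic form. -/
structure CycCtx {n d : ℕ} (B A : NDType n d) where
  K : ℕ
  V : ℕ → Fin d
  C : ℕ → Fin n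
  hK : 2 ≤ K
  hVB : ∀ l, V l ∈ B (C l)
  hVA : ∀ l, V (l+1) ∈ A (C l)
  hNe : ∀ l, V l ≠ V (l+1)
  hCong : ∀ a b, a % K = b % K → V a = V b ∧ C a = C b
  hInj : ∀ a b, V a = V b → a % K = b % K
  hMin : ∀ m, 0 < m → m < K → ∀ v c, ¬ CData B A m v c
  hDirEx : ∃ l, l < K ∧ (V l ∉ A (C l) ∨ V (l+1) ∉ B (C l))

namespace CycCtx

variable {n d : ℕ} {B A : NDType n d} (ctx : CycCtx B A)

/-- The step at index `l` is properly directed. -/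
def Dir (l : ℕ) : Prop := ctx.V l ∉ A (ctx.C l) ∨ ctx.V (l+1) ∉ B (ctx.C l)

lemma K0 : 0 < ctx.K := by have := ctx.hK; omega

lemma dir_congr {a b : ℕ} (h : a % ctx.K = b % ctx.K) : ctx.Dir a ↔ ctx.Dir b := by
  obtain ⟨e1, e2⟩ := ctx.hCong a b h
  obtain ⟨e3, _⟩ := ctx.hCong (a+1) (b+1) (Nat.ModEq.add_right 1 h)
  unfold Dir
  rw [e1, e2, e3]

lemma exists_rep (l₀ s : ℕ) : ∃ t, t < ctx.K ∧ (s + t) % ctx.K = l₀ % ctx.K :=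
  ⟨(l₀ + (ctx.K - s % ctx.K)) % ctx.K, Nat.mod_lt _ ctx.K0, AR1 _ _ _ ctx.K0⟩

lemma alpha_pos {a b : ℕ} (h : a % ctx.K ≠ b % ctx.K) :
    0 < (a + (ctx.K - b % ctx.K)) % ctx.K := by
  rcases Nat.eq_zero_or_pos ((a + (ctx.K - b % ctx.K)) % ctx.K) with h0 | h0
  · exfalso
    have := AR1 ctx.K a b ctx.K0
    rw [h0, Nat.add_zero] at this
    exact h this.symm
  · exact h0

lemma dir_locate {a b : ℕ} (hne : a % ctx.K ≠ b % ctx.K)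
    (hund : ∀ t, t < (a + (ctx.K - b % ctx.K)) % ctx.K → ¬ ctx.Dir (b + t)) :
    ∃ t, t < (b + (ctx.K - a % ctx.K)) % ctx.K ∧ ctx.Dir (a + t) := by
  obtain ⟨l₀, hl₀, hd⟩ := ctx.hDirEx
  have hDir0 : ctx.Dir l₀ := hd
  obtain ⟨t₁, ht₁K, ht₁⟩ := ctx.exists_rep l₀ b
  set α := (a + (ctx.K - b % ctx.K)) % ctx.K with hα
  set β := (b + (ctx.K - a % ctx.K)) % ctx.K with hβ
  have hsum : α + β = ctx.K := modsum _ _ _ ctx.K0 hne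
  by_cases hcase : t₁ < α
  · exact absurd ((ctx.dir_congr ht₁).mpr hDir0) (hund t₁ hcase)
  · refine ⟨t₁ - α, by omega, ?_⟩
    have hba : (b + α) % ctx.K = a % ctx.K := AR1 _ _ _ ctx.K0
    have hmt : (a + (t₁ - α)) % ctx.K = (b + t₁) % ctx.K := by
      have h1 : b + α ≡ a [MOD ctx.K] := hba
      have h2 : (b + α) + (t₁ - α) ≡ a + (t₁ - α) [MOD ctx.K] :=
        Nat.ModEq.add_right _ h1
      have h3 : (b + α) + (t₁ - α) = b + t₁ := by omega
      rw [h3] at h2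
      exact h2.symm
    exact (ctx.dir_congr (hmt.trans ht₁)).mpr hDir0

/-- The shortcut lemma: given an extra edge `V a → V b` (via coordinate `c₀`)
with `b ≠ a, a+1` mod `K`, the closed walk `V b → V (b+1) → ⋯ → V a → V b` is
shorter than `K`, so by minimality it contains no properly directed step. -/
lemma shortcut (a b : ℕ) (c₀ : Fin n) (hxB : ctx.V a ∈ B c₀) (hyA : ctx.V b ∈ A c₀)
    (h1 : a % ctx.K ≠ b % ctx.K) (h2 : (a+1) % ctx.K ≠ b % ctx.K)
    (hbad : (∃ t, t < (a + (ctx.K - b % ctx.K)) % ctx.K ∧ ctx.Dir (b + t)) ∨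
      (ctx.V a ∉ A c₀ ∨ ctx.V b ∉ B c₀)) : False := by
  set α := (a + (ctx.K - b % ctx.K)) % ctx.K with hα
  have hαK : α < ctx.K := Nat.mod_lt _ ctx.K0
  have hba : (b + α) % ctx.K = a % ctx.K := AR1 _ _ _ ctx.K0
  have hα0 : 0 < α := ctx.alpha_pos h1
  have hVba : ctx.V (b + α) = ctx.V a := (ctx.hCong _ _ hba).1
  have hα1 : α + 1 < ctx.K := by
    rcases Nat.lt_or_ge (α+1) ctx.K with h | h
    · exact h
    · exfalso
      have hαe : α = ctx.K - 1 := by omega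
      apply h2
      have hm1 : b + α ≡ a [MOD ctx.K] := hba
      have hm2 : (b + α) + 1 ≡ a + 1 [MOD ctx.K] := Nat.ModEq.add_right 1 hm1
      have hm3 : b + α + 1 = b + ctx.K := by omega
      rw [hm3] at hm2
      have : (b + ctx.K) % ctx.K = (a+1) % ctx.K := hm2
      rw [Nat.add_mod_right] at this
      exact this.symm
  apply ctx.hMin (α+1) (by omega) hα1
    (fun j => if j = α + 1 then ctx.V b else ctx.V (b + j))
    (fun j => if j = α then c₀ else ctx.C (b + j))
  refine ⟨?_, ?_, ?_, ?_, ?_⟩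
  · show (if α + 1 = α + 1 then ctx.V b else ctx.V (b + (α+1))) =
        (if 0 = α + 1 then ctx.V b else ctx.V (b + 0))
    rw [if_pos rfl, if_neg (by omega : ¬(0:ℕ) = α + 1), Nat.add_zero]
  · intro l hl
    simp only [if_neg (by omega : l ≠ α + 1)]
    by_cases he : l = α
    · subst he
      simp only [if_pos rfl]
      rw [hVba]; exact hxB
    · simp only [if_neg he]
      exact ctx.hVB _
  · intro l hl
    by_cases he : l = α
    · subst he
      simp only [if_pos rfl, if_pos rfl]
      exact hyA
    · have hl' : l < α := by omega
      simp only [if_neg he, if_neg (by omega : l + 1 ≠ α + 1)]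
      have := ctx.hVA (b + l)
      rw [show b + l + 1 = b + (l + 1) by omega] at this
      exact this
  · intro l hl
    by_cases he : l = α
    · subst he
      simp only [if_pos rfl, if_neg (by omega : α ≠ α + 1)]
      rw [hVba]
      intro hcon
      exact h1 (ctx.hInj _ _ hcon)
    · simp only [if_neg (by omega : l ≠ α + 1), if_neg (by omega : l + 1 ≠ α + 1)]
      have := ctx.hNe (b + l)
      rw [show b + l + 1 = b + (l + 1) by omega] at this
      exact this
  · rcases hbad with ⟨t, ht, hd⟩ | hd
    · refine ⟨t, by omega, ?_⟩
      simp only [if_neg (by omega : t ≠ α + 1), if_neg (by omega : t ≠ α),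
        if_neg (by omega : t + 1 ≠ α + 1)]
      rcases hd with hd | hd
      · exact Or.inl hd
      · refine Or.inr ?_
        rw [show b + t + 1 = b + (t + 1) by omega] at hd
        exact hd
    · refine ⟨α, by omega, ?_⟩
      simp only [if_pos rfl, if_neg (by omega : α ≠ α + 1)]
      rw [hVba]
      exact hd

/-- Structure of the `A`-entries along the cycle: only the two endpoints of the
corresponding cycle edge can occur. -/
lemma A_mem_pair (l m : ℕ) (hm : ctx.V m ∈ A (ctx.C l)) :
    m % ctx.K = l % ctx.K ∨ m % ctx.K = (l + 1) % ctx.K := by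
  by_contra hcon
  push_neg at hcon
  obtain ⟨hml, hml1⟩ := hcon
  -- A-shortcut with a := l, b := m
  have hAs : ∀ hb, _ := fun hb =>
    ctx.shortcut l m (ctx.C l) (ctx.hVB l) hm (fun h => hml h.symm)
      (fun h => hml1 h.symm) hb
  have hpair : ctx.V l ∈ A (ctx.C l) ∧ ctx.V m ∈ B (ctx.C l) := by
    by_contra h
    exact hAs (Or.inr (by tauto))
  have hund1 : ∀ t, t < (l + (ctx.K - m % ctx.K)) % ctx.K → ¬ ctx.Dir (m + t) :=
    fun t ht hd => hAs (Or.inl ⟨t, ht, hd⟩)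
  by_cases hlm1 : (m + 1) % ctx.K = l % ctx.K
  · -- subcase m ≡ l - 1
    have hK := ctx.hK
    have hsucc_ne : ∀ x : ℕ, (x + 1) % ctx.K ≠ x % ctx.K := by
      intro x h
      have h1 : x + 1 ≡ x [MOD ctx.K] := h
      have h2 := ctx.hCong (x+1) x h
      exact ctx.hNe x h2.1.symm
    -- B-shortcut with a := m, b := l + 1
    have hBs : ∀ hb, _ := fun hb =>
      ctx.shortcut m (l+1) (ctx.C l) hpair.2 (ctx.hVA l) hml1
        (by rw [hlm1]; exact fun h => (hsucc_ne l) h.symm) hb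
    have hpair2 : ctx.V m ∈ A (ctx.C l) ∧ ctx.V (l+1) ∈ B (ctx.C l) := by
      by_contra h
      exact hBs (Or.inr (by tauto))
    have hund2 : ∀ t, t < (m + (ctx.K - (l+1) % ctx.K)) % ctx.K →
        ¬ ctx.Dir (l + 1 + t) := fun t ht hd => hBs (Or.inl ⟨t, ht, hd⟩)
    set γ := (m + (ctx.K - (l+1) % ctx.K)) % ctx.K with hγ
    have hγK : γ < ctx.K := Nat.mod_lt _ ctx.K0
    have hARγ : (l + 1 + γ) % ctx.K = m % ctx.K := AR1 _ _ _ ctx.K0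
    have hγe : γ + 2 = ctx.K := by
      have hm2 : (l + 1 + γ) + 1 ≡ m + 1 [MOD ctx.K] := Nat.ModEq.add_right 1 hARγ
      have hm3 : l + (γ + 2) ≡ l + 0 [MOD ctx.K] := by
        have h5 : l + (γ + 2) = l + 1 + γ + 1 := by omega
        rw [h5, Nat.add_zero]
        exact hm2.trans hlm1
      have hm4 : (γ + 2) % ctx.K = 0 % ctx.K := Nat.ModEq.add_left_cancel' l hm3
      rw [Nat.zero_mod] at hm4
      obtain ⟨q, hq⟩ := Nat.dvd_of_mod_eq_zero hm4
      rcases q with _ | _ | q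
      · omega
      · omega
      · exfalso
        have : ctx.K * 2 ≤ ctx.K * (q + 1 + 1) := Nat.mul_le_mul_left _ (by omega)
        omega
    obtain ⟨l₀, hl₀K, hd₀⟩ := ctx.hDirEx
    have hd₀' : ctx.Dir l₀ := hd₀
    have hndl : ¬ ctx.Dir l := by
      intro h
      rcases h with h | h
      exacts [h hpair.1, h hpair2.2]
    have hα1e : (l + (ctx.K - m % ctx.K)) % ctx.K = 1 := by
      have hAR : (m + (l + (ctx.K - m % ctx.K)) % ctx.K) % ctx.K = l % ctx.K :=
        AR1 _ _ _ ctx.K0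
      have h6 : m + (l + (ctx.K - m % ctx.K)) % ctx.K ≡ m + 1 [MOD ctx.K] :=
        Nat.ModEq.trans hAR (Nat.ModEq.symm hlm1)
      have h7 : (l + (ctx.K - m % ctx.K)) % ctx.K ≡ 1 [MOD ctx.K] :=
        Nat.ModEq.add_left_cancel' m h6
      have h8 : (l + (ctx.K - m % ctx.K)) % ctx.K % ctx.K = 1 % ctx.K := h7
      rw [Nat.mod_mod_of_dvd _ dvd_rfl, Nat.mod_eq_of_lt (by omega : 1 < ctx.K)] at h8
      exact h8
    apply absurd hd₀'
    by_cases hc1 : l₀ % ctx.K = l % ctx.K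
    · rw [ctx.dir_congr hc1]
      exact hndl
    by_cases hc2 : l₀ % ctx.K = m % ctx.K
    · rw [ctx.dir_congr hc2]
      have h9 := hund1 0 (by omega)
      rw [Nat.add_zero] at h9
      exact h9
    · set t := (l₀ + (ctx.K - (l+1) % ctx.K)) % ctx.K with htdef
      have htK : t < ctx.K := Nat.mod_lt _ ctx.K0
      have hARt : (l + 1 + t) % ctx.K = l₀ % ctx.K := AR1 _ _ _ ctx.K0
      have htne1 : t ≠ ctx.K - 1 := by
        intro h
        apply hc1
        rw [← hARt, h]
        have h10 : l + 1 + (ctx.K - 1) = l + ctx.K := by omega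
        rw [h10, Nat.add_mod_right]
      have htne2 : t ≠ γ := by
        intro h
        apply hc2
        rw [← hARt, h]
        exact hARγ
      have htγ : t < γ := by omega
      rw [ctx.dir_congr (Eq.symm hARt)]
      exact hund2 t htγ
  · -- subcase m ≢ l - 1 : full contradiction
    have hloc := ctx.dir_locate (a := l) (b := m) hml.symm hund1
    exact ctx.shortcut m l (ctx.C l) hpair.2 hpair.1 hml
      (fun h => hlm1 h) (Or.inl hloc)

lemma A_pair (hSurj : ∀ x : Fin d, ∃ m, m < ctx.K ∧ ctx.V m = x)
    (hbig : ∀ i, 2 ≤ (A i).card) (l : ℕ) :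
    A (ctx.C l) = {ctx.V l, ctx.V (l+1)} := by
  have hsub : A (ctx.C l) ⊆ {ctx.V l, ctx.V (l+1)} := by
    intro x hx
    obtain ⟨m, hmK, hmx⟩ := hSurj x
    subst hmx
    rcases ctx.A_mem_pair l m hx with h | h
    · rw [(ctx.hCong m l h).1]
      exact Finset.mem_insert_self _ _
    · rw [(ctx.hCong m (l+1) h).1]
      exact Finset.mem_insert_of_mem (Finset.mem_singleton_self _)
  have hc2 : ({ctx.V l, ctx.V (l+1)} : Finset (Fin d)).card ≤ (A (ctx.C l)).card := by
    have h1 : ({ctx.V l, ctx.V (l+1)} : Finset (Fin d)).card ≤ 2 := by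
      apply le_trans (Finset.card_insert_le _ _)
      simp
    have := hbig (ctx.C l)
    omega
  exact Finset.eq_of_subset_of_card_le hsub hc2
/-- Every entry of `B` is contained in the corresponding entry of `A`, else a
suitable total refinement of `A` supports a directed cycle. -/
lemma B_subset_A (hSurj : ∀ x : Fin d, ∃ m, m < ctx.K ∧ ctx.V m = x)
    (hAne : ∀ i, (A i).Nonempty) (hbig : ∀ i, 2 ≤ (A i).card)
    (Hres : ∀ A', IsRefinement A' A → A' ≠ A → ¬ HasDirectedCycle B A')
    (i : Fin n) : B i ⊆ A i := by
  intro u hu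
  by_contra huA
  obtain ⟨p, hpK, hpu⟩ := hSurj u
  have hK0 := ctx.K0
  set P : Fin ctx.K → Finset (Fin d) := fun t => {ctx.V (p + ctx.K - t.val)} with hP
  have hOP : IsOrderedPartition P := by
    refine ⟨fun t => ⟨_, Finset.mem_singleton_self _⟩, ?_, ?_⟩
    · intro t t' hne
      rw [Finset.disjoint_singleton]
      intro heq
      apply hne
      have hmod := ctx.hInj _ _ heq
      have h1 := t.isLt
      have h2 := t'.isLt
      exact Fin.ext (mod_cancel hK0 h1 h2 hmod (by omega))
    · intro x
      obtain ⟨m, hmK, hmx⟩ := hSurj x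
      set s := (p + (ctx.K - m % ctx.K)) % ctx.K with hs
      have hsK : s < ctx.K := Nat.mod_lt _ hK0
      refine ⟨⟨s, hsK⟩, ?_⟩
      have hAR : (m + s) % ctx.K = p % ctx.K := AR1 _ _ _ hK0
      have hX : (p + ctx.K - s) % ctx.K = m % ctx.K := by
        have he : (p + ctx.K - s) + s = p + ctx.K := by omega
        have h3 : m + s ≡ (p + ctx.K - s) + s [MOD ctx.K] := by
          rw [he]
          exact hAR.trans (Nat.add_mod_right p ctx.K).symm
        exact (Nat.ModEq.add_right_cancel' s h3).symm
      show x ∈ ({ctx.V (p + ctx.K - s)} : Finset (Fin d))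
      rw [Finset.mem_singleton, ← hmx]
      exact ((ctx.hCong _ _ hX).1).symm
  obtain ⟨A'', hRB⟩ := exists_refinementBy A hAne P hOP
  have hsel : ∀ i' : Fin n, ∃ a : Fin ctx.K,
      A'' i' = {ctx.V (p + ctx.K - a.val)} ∧ ctx.V (p + ctx.K - a.val) ∈ A i' ∧
      (∀ b : Fin ctx.K, b < a → ctx.V (p + ctx.K - b.val) ∉ A i') := by
    intro i'
    obtain ⟨a, hne', hemp', heq'⟩ := hRB i'
    have hmem : ctx.V (p + ctx.K - a.val) ∈ A i' := by
      obtain ⟨y, hy⟩ := hne'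
      rw [Finset.mem_inter] at hy
      have hyv : y = ctx.V (p + ctx.K - a.val) := Finset.mem_singleton.mp hy.2
      rw [← hyv]
      exact hy.1
    refine ⟨a, ?_, hmem, ?_⟩
    · rw [heq', Finset.inter_comm]
      exact Finset.singleton_inter_of_mem hmem
    · intro b hb hbmem
      have hbm : ctx.V (p + ctx.K - b.val) ∈ A i' ∩ P b :=
        Finset.mem_inter.mpr ⟨hbmem, Finset.mem_singleton_self _⟩
      rw [hemp' b hb] at hbm
      exact Finset.notMem_empty _ hbm
  have hselC : ∀ q, q < ctx.K → q ≠ p → A'' (ctx.C q) = {ctx.V (q+1)} := by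
    intro q hqK hqp
    obtain ⟨a, hEq, hMem, hEmp⟩ := hsel (ctx.C q)
    rw [ctx.A_pair hSurj hbig q] at hMem
    rcases Finset.mem_insert.mp hMem with h | h
    · exfalso
      have haK : (p + ctx.K - a.val) % ctx.K = q % ctx.K := ctx.hInj _ _ h
      have haLt := a.isLt
      have ha0 : a.val ≠ 0 := by
        intro h0
        rw [h0] at haK
        simp only [Nat.sub_zero] at haK
        rw [Nat.add_mod_right, Nat.mod_eq_of_lt hpK, Nat.mod_eq_of_lt hqK] at haK
        exact hqp haK.symm
      have hb : (p + ctx.K - (a.val - 1)) % ctx.K = (q+1) % ctx.K := by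
        have hx : p + ctx.K - (a.val - 1) = (p + ctx.K - a.val) + 1 := by omega
        rw [hx]
        exact Nat.ModEq.add_right 1 haK
      refine hEmp ⟨a.val - 1, by omega⟩ (by simp only [Fin.lt_def]; omega) ?_
      show ctx.V (p + ctx.K - (a.val - 1)) ∈ A (ctx.C q)
      rw [(ctx.hCong _ _ hb).1]
      exact ctx.hVA q
    · rw [hEq, Finset.mem_singleton.mp h]
  obtain ⟨ai, hEqI, hMemI, _⟩ := hsel i
  set w := ctx.V (p + ctx.K - ai.val) with hw
  obtain ⟨q₀, hq₀K, hq₀w⟩ := hSurj w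
  have hwu : w ≠ u := fun h => huA (h ▸ hMemI)
  have hq₀p : q₀ % ctx.K ≠ p % ctx.K := by
    intro h
    apply hwu
    rw [← hq₀w, ← hpu]
    exact (ctx.hCong _ _ h).1
  set s := (p + (ctx.K - q₀ % ctx.K)) % ctx.K with hs
  have hsK : s < ctx.K := Nat.mod_lt _ hK0
  have hs0 : 0 < s := ctx.alpha_pos (fun h => hq₀p h.symm)
  have hclose : (q₀ + s) % ctx.K = p % ctx.K := AR1 _ _ _ hK0
  have hstep1 : ∀ t, t < s → (q₀ + t) % ctx.K ≠ p % ctx.K := by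
    intro t ht hcon
    have h3 : q₀ + t ≡ q₀ + s [MOD ctx.K] := hcon.trans hclose.symm
    have h5 : t % ctx.K = s % ctx.K := Nat.ModEq.add_left_cancel' q₀ h3
    rw [Nat.mod_eq_of_lt (by omega), Nat.mod_eq_of_lt hsK] at h5
    omega
  have hAq : ∀ t, t < s → A'' (ctx.C (q₀ + t)) = {ctx.V (q₀ + t + 1)} := by
    intro t ht
    have h6 : (q₀ + t) % ctx.K < ctx.K := Nat.mod_lt _ hK0
    have hqp' : (q₀ + t) % ctx.K ≠ p := fun h =>
      hstep1 t ht (by rw [h, Nat.mod_eq_of_lt hpK])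
    have h7 := hselC ((q₀ + t) % ctx.K) h6 hqp'
    have e1 : ctx.C ((q₀ + t) % ctx.K) = ctx.C (q₀ + t) :=
      (ctx.hCong _ _ (Nat.mod_mod_of_dvd _ dvd_rfl)).2
    have e2 : ctx.V ((q₀ + t) % ctx.K + 1) = ctx.V (q₀ + t + 1) := by
      refine (ctx.hCong _ _ ?_).1
      exact Nat.ModEq.add_right 1 (Nat.mod_modEq _ _)
    rw [e1, e2] at h7
    exact h7
  have hcd : CData B A'' (s+1)
      (fun j => if j = 0 then u else ctx.V (q₀ + j - 1))
      (fun j => if j = 0 then i else ctx.C (q₀ + j - 1)) := by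
    refine ⟨?_, ?_, ?_, ?_, ?_⟩
    · show (if s + 1 = 0 then u else ctx.V (q₀ + (s+1) - 1)) =
          (if (0:ℕ) = 0 then u else ctx.V (q₀ + 0 - 1))
      rw [if_neg (by omega : ¬ s + 1 = 0), if_pos rfl,
        show q₀ + (s+1) - 1 = q₀ + s by omega, (ctx.hCong _ _ hclose).1]
      exact hpu
    · intro l hl
      by_cases h0 : l = 0
      · subst h0
        show u ∈ B i
        exact hu
      · simp only [if_neg h0]
        exact ctx.hVB _
    · intro l hl
      by_cases h0 : l = 0
      · subst h0
        show (if (0:ℕ) + 1 = 0 then u else ctx.V (q₀ + (0+1) - 1)) ∈ A'' i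
        rw [if_neg (by omega : ¬ (0:ℕ) + 1 = 0),
          show q₀ + (0 + 1) - 1 = q₀ by omega, hq₀w, hEqI]
        exact Finset.mem_singleton_self _
      · simp only [if_neg h0, if_neg (by omega : ¬ l + 1 = 0)]
        have h8 := hAq (l - 1) (by omega)
        rw [show q₀ + (l - 1) = q₀ + l - 1 by omega] at h8
        rw [h8, show q₀ + (l + 1) - 1 = q₀ + l - 1 + 1 by omega]
        exact Finset.mem_singleton_self _
    · intro l hl
      by_cases h0 : l = 0
      · subst h0
        show u ≠ (if (0:ℕ) + 1 = 0 then u else ctx.V (q₀ + (0+1) - 1))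
        rw [if_neg (by omega : ¬ (0:ℕ) + 1 = 0),
          show q₀ + (0 + 1) - 1 = q₀ by omega, hq₀w]
        exact fun h => hwu h.symm
      · simp only [if_neg h0, if_neg (by omega : ¬ l + 1 = 0)]
        have h9 := ctx.hNe (q₀ + l - 1)
        rw [show q₀ + l - 1 + 1 = q₀ + (l + 1) - 1 by omega] at h9
        exact h9
    · refine ⟨0, by omega, Or.inl ?_⟩
      show u ∉ A'' i
      intro hmem
      rw [hEqI, Finset.mem_singleton] at hmem
      exact hwu hmem.symm
  have hA''ne : A'' ≠ A := by
    intro heq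
    have h1 : A'' i = A i := congrFun heq i
    rw [hEqI] at h1
    have h2 := hbig i
    rw [← h1] at h2
    simp at h2
  exact Hres A'' ⟨ctx.K, P, hOP, hRB⟩ hA''ne (hdc_of_cdata hcd)

/-- The final construction of the total refinement `T` of `B`. -/
lemma conclusion (hSurj : ∀ x : Fin d, ∃ m, m < ctx.K ∧ ctx.V m = x)
    (hbig : ∀ i, 2 ≤ (A i).card) (hBne : ∀ i, (B i).Nonempty)
    (hBA : ∀ i, B i ⊆ A i) :
    ∃ T, IsTotalRefinement T B ∧ (∀ i, T i ⊆ A i) ∧ ¬ IsRefinement T A := by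
  have hK0 := ctx.K0
  obtain ⟨l₀, hl₀K, hd₀⟩ := ctx.hDirEx
  have hApair := ctx.A_pair hSurj hbig
  have hBl₀ : B (ctx.C l₀) = {ctx.V l₀} := by
    have h1 : ctx.V l₀ ∈ A (ctx.C l₀) := by
      rw [hApair l₀]
      exact Finset.mem_insert_self _ _
    have h2 : ctx.V (l₀+1) ∉ B (ctx.C l₀) := by
      rcases hd₀ with h | h
      · exact absurd h1 h
      · exact h
    have hsub : B (ctx.C l₀) ⊆ {ctx.V l₀} := by
      intro x hx
      have hxA := hBA _ hx
      rw [hApair l₀] at hxA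
      rcases Finset.mem_insert.mp hxA with h | h
      · rw [h]; exact Finset.mem_singleton_self _
      · exfalso
        rw [Finset.mem_singleton.mp h] at hx
        exact h2 hx
    rcases Finset.subset_singleton_iff.mp hsub with h | h
    · exfalso
      obtain ⟨y, hy⟩ := hBne (ctx.C l₀)
      rw [h] at hy
      exact Finset.notMem_empty _ hy
    · exact h
  set Q : Fin ctx.K → Finset (Fin d) := fun t => {ctx.V (l₀ + 1 + t.val)} with hQ
  have hOPQ : IsOrderedPartition Q := by
    refine ⟨fun t => ⟨_, Finset.mem_singleton_self _⟩, ?_, ?_⟩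
    · intro t t' hne
      rw [Finset.disjoint_singleton]
      intro heq
      apply hne
      have hmod := ctx.hInj _ _ heq
      have h1 := t.isLt
      have h2 := t'.isLt
      exact Fin.ext (mod_cancel hK0 h1 h2 hmod.symm (by omega))
    · intro x
      obtain ⟨m, hmK, hmx⟩ := hSurj x
      set t := (m + (ctx.K - (l₀ + 1) % ctx.K)) % ctx.K with ht
      have htK : t < ctx.K := Nat.mod_lt _ hK0
      refine ⟨⟨t, htK⟩, ?_⟩
      have hAR : (l₀ + 1 + t) % ctx.K = m % ctx.K := AR1 _ _ _ hK0
      show x ∈ ({ctx.V (l₀ + 1 + t)} : Finset (Fin d))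
      rw [Finset.mem_singleton, ← hmx]
      exact ((ctx.hCong _ _ hAR).1).symm
  obtain ⟨T, hRBT⟩ := exists_refinementBy B hBne Q hOPQ
  have hselT : ∀ i' : Fin n, ∃ a : Fin ctx.K,
      T i' = {ctx.V (l₀ + 1 + a.val)} ∧ ctx.V (l₀ + 1 + a.val) ∈ B i' ∧
      (∀ b : Fin ctx.K, b < a → ctx.V (l₀ + 1 + b.val) ∉ B i') := by
    intro i'
    obtain ⟨a, hne', hemp', heq'⟩ := hRBT i'
    have hmem : ctx.V (l₀ + 1 + a.val) ∈ B i' := by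
      obtain ⟨y, hy⟩ := hne'
      rw [Finset.mem_inter] at hy
      have hyv : y = ctx.V (l₀ + 1 + a.val) := Finset.mem_singleton.mp hy.2
      rw [← hyv]
      exact hy.1
    refine ⟨a, ?_, hmem, ?_⟩
    · rw [heq', Finset.inter_comm]
      exact Finset.singleton_inter_of_mem hmem
    · intro b hb hbmem
      have hbm : ctx.V (l₀ + 1 + b.val) ∈ B i' ∩ Q b :=
        Finset.mem_inter.mpr ⟨hbmem, Finset.mem_singleton_self _⟩
      rw [hemp' b hb] at hbm
      exact Finset.notMem_empty _ hbm
  have hTl : ∀ l, l < ctx.K → T (ctx.C l) = {ctx.V l} := by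
    intro l hlK
    obtain ⟨a, hEq, hMem, hEmp⟩ := hselT (ctx.C l)
    have hxA := hBA _ hMem
    rw [hApair l] at hxA
    rcases Finset.mem_insert.mp hxA with h | h
    · rw [hEq, h]
    · exfalso
      have h' : ctx.V (l₀ + 1 + a.val) = ctx.V (l + 1) := Finset.mem_singleton.mp h
      by_cases hll₀ : l % ctx.K = l₀ % ctx.K
      · have hCl : ctx.C l = ctx.C l₀ := (ctx.hCong _ _ hll₀).2
        have hVl : ctx.V l = ctx.V l₀ := (ctx.hCong _ _ hll₀).1
        have hm2 : ctx.V (l₀ + 1 + a.val) ∈ ({ctx.V l₀} : Finset (Fin d)) := by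
          rw [← hBl₀, ← hCl]
          exact hMem
      -- V (l+1) = V l₀ = V l : contradiction with hNe
        have hm3 : ctx.V (l+1) = ctx.V l₀ := by
          rw [← h']
          exact Finset.mem_singleton.mp hm2
        rw [← hVl] at hm3
        exact ctx.hNe l hm3.symm
      · have haIdx : (l₀ + 1 + a.val) % ctx.K = (l+1) % ctx.K := ctx.hInj _ _ h'
        have haLt := a.isLt
        have ha0 : a.val ≠ 0 := by
          intro h0
          rw [h0, Nat.add_zero] at haIdx
          have h4 : l₀ % ctx.K = l % ctx.K := Nat.ModEq.add_right_cancel' 1 haIdx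
          exact hll₀ h4.symm
        have hb : (l₀ + 1 + (a.val - 1)) % ctx.K = l % ctx.K := by
          have h5 : (l₀ + 1 + (a.val - 1)) + 1 = l₀ + 1 + a.val := by omega
          refine Nat.ModEq.add_right_cancel' 1 ?_
          rw [h5]
          exact haIdx
        refine hEmp ⟨a.val - 1, by omega⟩ (by simp only [Fin.lt_def]; omega) ?_
        show ctx.V (l₀ + 1 + (a.val - 1)) ∈ B (ctx.C l)
        rw [(ctx.hCong _ _ hb).1]
        exact ctx.hVB l
  refine ⟨T, ⟨⟨ctx.K, Q, hOPQ, hRBT⟩, fun i => ?_⟩, fun i => ?_, ?_⟩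
  · obtain ⟨a, hEq, _, _⟩ := hselT i
    exact ⟨_, hEq⟩
  · obtain ⟨a, hEq, hMem, _⟩ := hselT i
    rw [hEq]
    rw [Finset.singleton_subset_iff]
    exact hBA i hMem
  · rintro ⟨k', Q', hOP', hRB'⟩
    have hexQ : ∀ x : Fin d, ∃ a, x ∈ Q' a := hOP'.2.2
    have huniq : ∀ (x : Fin d) (a : Fin k'), x ∈ Q' a → (hexQ x).choose = a := by
      intro x a ha
      by_contra hne
      exact (Finset.disjoint_left.mp (hOP'.2.1 _ _ hne) (hexQ x).choose_spec) ha
    set g : ℕ → Fin k' := fun l => (hexQ (ctx.V l)).choose with hg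
    have hmono0 : ∀ l, l < ctx.K → g l < g (l+1) := by
      intro l hlK
      obtain ⟨a, hne', hemp', heq'⟩ := hRB' (ctx.C l)
      rw [hTl l hlK] at heq'
      have hVlQ : ctx.V l ∈ Q' a := by
        have hm : ctx.V l ∈ A (ctx.C l) ∩ Q' a := by
          rw [← heq']
          exact Finset.mem_singleton_self _
        exact (Finset.mem_inter.mp hm).2
      have hpa : g l = a := huniq _ _ hVlQ
      have hbQ : ctx.V (l+1) ∈ Q' (g (l+1)) := (hexQ _).choose_spec
      have hVA' : ctx.V (l+1) ∈ A (ctx.C l) := ctx.hVA l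
      rcases lt_trichotomy (g (l+1)) a with hlt | heqq | hgt
      · exfalso
        have hm : ctx.V (l+1) ∈ A (ctx.C l) ∩ Q' (g (l+1)) :=
          Finset.mem_inter.mpr ⟨hVA', hbQ⟩
        rw [hemp' _ hlt] at hm
        exact Finset.notMem_empty _ hm
      · exfalso
        have hm : ctx.V (l+1) ∈ A (ctx.C l) ∩ Q' a :=
          Finset.mem_inter.mpr ⟨hVA', heqq ▸ hbQ⟩
        rw [← heq', Finset.mem_singleton] at hm
        exact ctx.hNe l hm.symm
      · rw [hpa]
        exact hgt
    have hmono : ∀ l, g l < g (l+1) := by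
      intro l
      have e1 : ctx.V l = ctx.V (l % ctx.K) := ((ctx.hCong _ _ (Nat.mod_mod_of_dvd _ dvd_rfl)).1).symm
      have e2 : ctx.V (l+1) = ctx.V (l % ctx.K + 1) := by
        refine ((ctx.hCong _ _ ?_).1).symm
        exact (Nat.ModEq.add_right 1 (Nat.mod_modEq _ _))
      have hgl : g l = g (l % ctx.K) := by
        show (hexQ (ctx.V l)).choose = (hexQ (ctx.V (l % ctx.K))).choose
        congr 1
        rw [e1]
      have hgl1 : g (l+1) = g (l % ctx.K + 1) := by
        show (hexQ (ctx.V (l+1))).choose = (hexQ (ctx.V (l % ctx.K + 1))).choose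
        congr 1
        rw [e2]
      rw [hgl, hgl1]
      exact hmono0 _ (Nat.mod_lt _ hK0)
    have hclg : g ctx.K = g 0 := by
      show (hexQ (ctx.V ctx.K)).choose = (hexQ (ctx.V 0)).choose
      congr 1
      rw [(ctx.hCong ctx.K 0 (by simp)).1]
    exact no_cyclic_strict g hK0 hmono hclg

end CycCtx

end AuxDev

/-- Core case analysis of the reconstruction theorem: let `S`
be a refinement-closed collection of types with pairwise acyclic comparability
graphs, and let `A ∈ S` contain every element of `[d]` and have no singleton
coordinate. If `CG(B,A)` has a directed cycle for some `(n,d)`-type `B`, then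
either `CG(B,A')` has a directed cycle for some proper refinement `A'` of `A`,
or `B` has a total refinement `T` contained in `A` componentwise which is not a
refinement of `A`. -/
theorem reconstruction_core_case {n d : ℕ} (S : Set (NDType n d))
    (htype : ∀ A ∈ S, IsType A)
    (hcomp : ∀ A ∈ S, ∀ B ∈ S, Acyclic A B)
    (hsurr : ∀ A ∈ S, ∀ C, IsRefinement C A → C ∈ S)
    (A : NDType n d) (hA : A ∈ S)
    (hfull : ∀ j : Fin d, ∃ i, j ∈ A i)
    (hbig : ∀ i, 2 ≤ (A i).card)
    (B : NDType n d) (hB : IsType B) (hcyc : HasDirectedCycle B A) :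
    (∃ A', IsRefinement A' A ∧ A' ≠ A ∧ HasDirectedCycle B A') ∨
    (∃ T, IsTotalRefinement T B ∧ (∀ i, T i ⊆ A i) ∧ ¬ IsRefinement T A) := by
  classical
  by_cases H1 : ∃ A', IsRefinement A' A ∧ A' ≠ A ∧ HasDirectedCycle B A'
  · exact Or.inl H1
  push_neg at H1
  have Hres : ∀ A', IsRefinement A' A → A' ≠ A → ¬ HasDirectedCycle B A' := H1
  right
  have hAne : ∀ i, (A i).Nonempty := htype A hA
  -- minimal cycle data
  have hPk : ∃ k, ∃ v0 c0, CData B A k v0 c0 := cdata_of_hdc hcyc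
  set K := Nat.find hPk with hKdef
  obtain ⟨v, c, hCD⟩ := Nat.find_spec hPk
  have hMinP : ∀ m, m < K → ¬ ∃ v0 c0, CData B A m v0 c0 := fun m hm => Nat.find_min hPk hm
  obtain ⟨hcl, hvb, hva, hvne, hdir⟩ := hCD
  have hK2 : 2 ≤ K := by
    obtain ⟨l, hl, _⟩ := hdir
    rcases Nat.lt_or_ge K 2 with h | h
    · exfalso
      have hl0 : l = 0 := by omega
      have hk1 : K = 1 := by omega
      apply hvne 0 (by omega)
      rw [hl0] at hl
      rw [show (0:ℕ) + 1 = K by omega]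
      rw [hcl]
    · exact h
  set V' : ℕ → Fin d := fun l => v (l % K) with hV'
  set C' : ℕ → Fin n := fun l => c (l % K) with hC'
  have hmodlt : ∀ l, l % K < K := fun l => Nat.mod_lt _ (by omega)
  have hVB' : ∀ l, V' l ∈ B (C' l) := fun l => hvb _ (hmodlt l)
  have hsucc : ∀ l, V' (l+1) = v (l % K + 1) := by
    intro l
    show v ((l+1) % K) = v (l % K + 1)
    have h1 : (l+1) % K = (l % K + 1) % K := by
      conv_lhs => rw [Nat.add_mod]
      rw [Nat.mod_eq_of_lt (show 1 < K by omega)]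
    rcases Nat.lt_or_ge (l % K + 1) K with h | h
    · rw [h1, Nat.mod_eq_of_lt h]
    · have h2 : l % K + 1 = K := by have := hmodlt l; omega
      rw [h1, h2, Nat.mod_self, ← h2]
      rw [h2]
      exact hcl.symm
  have hVA' : ∀ l, V' (l+1) ∈ A (C' l) := by
    intro l
    rw [hsucc l]
    exact hva _ (hmodlt l)
  have hNe' : ∀ l, V' l ≠ V' (l+1) := by
    intro l
    rw [hsucc l]
    exact hvne _ (hmodlt l)
  have hCong' : ∀ a b, a % K = b % K → V' a = V' b ∧ C' a = C' b := by
    intro a b h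
    constructor
    · show v (a % K) = v (b % K); rw [h]
    · show c (a % K) = c (b % K); rw [h]
  have hDirEx' : ∃ l, l < K ∧ (V' l ∉ A (C' l) ∨ V' (l+1) ∉ B (C' l)) := by
    obtain ⟨l, hl, h⟩ := hdir
    refine ⟨l, hl, ?_⟩
    have e1 : V' l = v l := by show v (l % K) = v l; rw [Nat.mod_eq_of_lt hl]
    have e2 : C' l = c l := by show c (l % K) = c l; rw [Nat.mod_eq_of_lt hl]
    rw [e1, e2, hsucc l, Nat.mod_eq_of_lt hl]
    exact h
  have hMin' : ∀ m, 0 < m → m < K → ∀ v0 c0, ¬ CData B A m v0 c0 :=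
    fun m _ hm v0 c0 hcd => hMinP m hm ⟨v0, c0, hcd⟩
  -- directed step transfer
  have hdircong : ∀ x y, x % K = y % K →
      ((V' x ∉ A (C' x) ∨ V' (x+1) ∉ B (C' x)) ↔
       (V' y ∉ A (C' y) ∨ V' (y+1) ∉ B (C' y))) := by
    intro x y h
    obtain ⟨e1, e2⟩ := hCong' x y h
    obtain ⟨e3, _⟩ := hCong' (x+1) (y+1) (Nat.ModEq.add_right 1 h)
    rw [e1, e2, e3]
  -- helper: subcycles contradict minimality
  have hsub : ∀ s m, 0 < m → m < K → V' (s + m) = V' s →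
      (∃ t, t < m ∧ ((V' (s+t) ∉ A (C' (s+t))) ∨ (V' (s+t+1) ∉ B (C' (s+t))))) → False := by
    rintro s m hm0 hmK hclose ⟨t, ht, hdirt⟩
    apply hMin' m hm0 hmK (fun j => V' (s+j)) (fun j => C' (s+j))
    refine ⟨?_, fun l _ => hVB' _, ?_, fun l _ => ?_, ⟨t, ht, ?_⟩⟩
    · show V' (s + m) = V' (s + 0)
      rw [Nat.add_zero]
      exact hclose
    · intro l _
      show V' (s + (l+1)) ∈ A (C' (s + l))
      rw [show s + (l+1) = (s+l)+1 by omega]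
      exact hVA' _
    · show V' (s + l) ≠ V' (s + (l+1))
      rw [show s + (l+1) = (s+l)+1 by omega]
      exact hNe' _
    · show V' (s+t) ∉ A (C' (s+t)) ∨ V' (s + (t+1)) ∉ B (C' (s+t))
      rw [show s + (t+1) = (s+t)+1 by omega]
      exact hdirt
  -- injectivity
  have hInj' : ∀ a b, V' a = V' b → a % K = b % K := by
    intro a b hab
    by_contra hnab
    have hVa : V' (a % K) = V' a := (hCong' (a % K) a (Nat.mod_mod_of_dvd _ dvd_rfl)).1
    have hVb : V' (b % K) = V' b := (hCong' (b % K) b (Nat.mod_mod_of_dvd _ dvd_rfl)).1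
    have key : ∀ a' b', a' < b' → b' < K → V' a' = V' b' → False := by
      intro a' b' hab' hbK hV
      obtain ⟨l₀, hl₀K, hd₀⟩ := hDirEx'
      set t₀ := if a' ≤ l₀ then l₀ - a' else l₀ + K - a' with ht₀
      have ht₀K : t₀ < K := by
        rw [ht₀]
        split <;> omega
      have ht₀e : (a' + t₀) % K = l₀ % K := by
        rw [ht₀]
        split
        · rw [show a' + (l₀ - a') = l₀ by omega]
        · rw [show a' + (l₀ + K - a') = l₀ + K by omega, Nat.add_mod_right]
      by_cases hcase : t₀ < b' - a'
      · apply hsub a' (b' - a') (by omega) (by omega)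
          (by rw [show a' + (b' - a') = b' by omega]; exact hV.symm)
        exact ⟨t₀, hcase, (hdircong _ _ ht₀e).mpr hd₀⟩
      · apply hsub b' (K - (b' - a')) (by omega) (by omega)
          (by rw [show b' + (K - (b' - a')) = a' + K by omega]
              rw [(hCong' (a' + K) a' (Nat.add_mod_right a' K)).1]
              exact hV)
        refine ⟨t₀ - (b' - a'), by omega, ?_⟩
        have he : b' + (t₀ - (b' - a')) = a' + t₀ := by omega
        rw [he]
        exact (hdircong _ _ ht₀e).mpr hd₀
    rcases lt_trichotomy (a % K) (b % K) with h | h | h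
    · exact key _ _ h (hmodlt b) (hVa.trans (hab.trans hVb.symm))
    · exact hnab h
    · exact key _ _ h (hmodlt a) (hVb.trans (hab.symm.trans hVa.symm))
  set ctx : CycCtx B A :=
    ⟨K, V', C', hK2, hVB', hVA', hNe', hCong', hInj', hMin', hDirEx'⟩ with hctx
  -- Part II : good sets give refinements
  have GP : ∀ X : Finset (Fin d),
      (∀ l, l < K → (A (C' l) ∩ X).Nonempty → V' (l+1) ∈ X) →
      ∀ i, A i ∩ X = ∅ ∨ A i ⊆ X := by
    intro X hgood i
    by_contra hcon
    push_neg at hcon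
    obtain ⟨hne1, hns⟩ := hcon
    have hXne : X.Nonempty := by
      obtain ⟨x, hx⟩ := hne1
      exact ⟨x, (Finset.mem_inter.mp hx).2⟩
    obtain ⟨y, hyA, hyX⟩ := Finset.not_subset.mp hns
    set P2 : Fin 2 → Finset (Fin d) := fun t => if t = 0 then X else Xᶜ with hP2
    have hOP2 : IsOrderedPartition P2 := by
      refine ⟨?_, ?_, ?_⟩
      · intro t
        by_cases h : t = 0
        · rw [hP2]; simp only [if_pos h]; exact hXne
        · rw [hP2]; simp only [if_neg h]
          exact ⟨y, Finset.mem_compl.mpr hyX⟩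
      · intro t t' hne
        rw [hP2]
        by_cases h : t = 0
        · have h' : ¬ t' = 0 := fun hh => hne (h.trans hh.symm)
          simp only [if_pos h, if_neg h']
          exact disjoint_compl_right
        · by_cases h' : t' = 0
          · simp only [if_neg h, if_pos h']
            exact disjoint_compl_left
          · exfalso
            apply hne
            have e1 : t = 1 := by omega
            have e2 : t' = 1 := by omega
            rw [e1, e2]
      · intro j
        by_cases h : j ∈ X
        · exact ⟨0, by rw [hP2]; simpa using h⟩
        · exact ⟨1, by rw [hP2]; simpa using h⟩
    obtain ⟨A'', hRB⟩ := exists_refinementBy A hAne P2 hOP2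
    have hbehave : ∀ i', ((A i' ∩ X).Nonempty ∧ A'' i' = A i' ∩ X) ∨
        (A i' ∩ X = ∅ ∧ A'' i' = A i') := by
      intro i'
      obtain ⟨t, htne, htemp, hteq⟩ := hRB i'
      by_cases ht0 : t = 0
      · left
        rw [ht0] at htne hteq
        simp only [hP2, if_pos rfl] at htne hteq
        exact ⟨htne, hteq⟩
      · right
        have ht1 : t = 1 := by omega
        have hemp : A i' ∩ X = ∅ := by
          have h0 := htemp 0 (by rw [ht1]; exact Fin.lt_def.mpr (by omega))
          simpa [hP2] using h0
        refine ⟨hemp, ?_⟩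
        rw [hteq, ht1]
        simp only [hP2, if_neg (by omega : ¬ (1 : Fin 2) = 0)]
        ext x
        simp only [Finset.mem_inter, Finset.mem_compl]
        constructor
        · exact fun h => h.1
        · intro hx
          refine ⟨hx, fun hxX => ?_⟩
          have : x ∈ A i' ∩ X := Finset.mem_inter.mpr ⟨hx, hxX⟩
          rw [hemp] at this
          exact Finset.notMem_empty _ this
    have hsubA : ∀ i', A'' i' ⊆ A i' := by
      intro i'
      rcases hbehave i' with ⟨_, he⟩ | ⟨_, he⟩
      · rw [he]; exact Finset.inter_subset_left
      · rw [he]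
    have hcd : CData B A'' K V' C' := by
      refine ⟨(hCong' K 0 (by simp)).1, fun l _ => hVB' l, ?_, fun l _ => hNe' l, ?_⟩
      · intro l hl
        rcases hbehave (C' l) with ⟨hne', heq'⟩ | ⟨_, heq'⟩
        · rw [heq']
          exact Finset.mem_inter.mpr ⟨hVA' l, hgood l hl hne'⟩
        · rw [heq']
          exact hVA' l
      · obtain ⟨l, hl, h⟩ := hDirEx'
        refine ⟨l, hl, ?_⟩
        rcases h with h | h
        · exact Or.inl (fun hmem => h (hsubA _ hmem))
        · exact Or.inr h
    have hA''ne : A'' ≠ A := by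
      intro heq
      rcases hbehave i with ⟨hne', heq'⟩ | ⟨hemp', _⟩
      · have h1 : A i ∩ X = A i := by rw [← heq', heq]
        apply hns
        intro x hx
        rw [← h1] at hx
        exact (Finset.mem_inter.mp hx).2
      · rw [hemp'] at hne1
        exact Finset.not_nonempty_empty hne1
    exact Hres A'' ⟨2, P2, hOP2, hRB⟩ hA''ne (hdc_of_cdata hcd)
  -- every vertex appears in some cycle entry of A
  have hxA : ∀ x : Fin d, ∃ l, l < K ∧ x ∈ A (C' l) := by
    intro x
    by_contra hcon
    push_neg at hcon
    have hgood : ∀ l, l < K → (A (C' l) ∩ {x}).Nonempty → V' (l+1) ∈ ({x} : Finset (Fin d)) := by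
      intro l hl ⟨y, hy⟩
      rw [Finset.mem_inter, Finset.mem_singleton] at hy
      exfalso
      exact hcon l hl (hy.2 ▸ hy.1)
    obtain ⟨i, hi⟩ := hfull x
    rcases GP {x} hgood i with h | h
    · exact Finset.notMem_empty x (h ▸ Finset.mem_inter.mpr ⟨hi, Finset.mem_singleton_self x⟩)
    · have h2 := hbig i
      have h3 := Finset.card_le_card h
      simp at h3
      omega
  -- the cycle entries of A are inside the vertex set, so V' is surjective
  have hSurj : ∀ x : Fin d, ∃ m, m < K ∧ V' m = x := by
    have hVSgood : ∀ l, l < K →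
        (A (C' l) ∩ (Finset.range K).image V').Nonempty →
        V' (l+1) ∈ (Finset.range K).image V' := by
      intro l hl _
      refine Finset.mem_image.mpr ⟨(l+1) % K, Finset.mem_range.mpr (hmodlt _), ?_⟩
      exact (hCong' ((l+1) % K) (l+1) (Nat.mod_mod_of_dvd _ dvd_rfl)).1
    intro x
    obtain ⟨l, hl, hx⟩ := hxA x
    rcases GP _ hVSgood (C' l) with h | h
    · exfalso
      have hm : V' (l+1) ∈ A (C' l) ∩ (Finset.range K).image V' :=
        Finset.mem_inter.mpr ⟨hVA' l, Finset.mem_image.mpr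
          ⟨(l+1) % K, Finset.mem_range.mpr (hmodlt _),
            (hCong' ((l+1) % K) (l+1) (Nat.mod_mod_of_dvd _ dvd_rfl)).1⟩⟩
      rw [h] at hm
      exact Finset.notMem_empty _ hm
    · obtain ⟨m, hm, he⟩ := Finset.mem_image.mp (h hx)
      exact ⟨m, Finset.mem_range.mp hm, he⟩
  have hBA : ∀ i, B i ⊆ A i := fun i => ctx.B_subset_A hSurj hAne hbig Hres i
  exact ctx.conclusion hSurj hbig hB hBA
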